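/- Fix a_s > 0 and real constants c1, c3, c4 with c4 ≠ 0, and define f(ε) as in the inverse-width root formula: f(ε) = (1/4) * sqrt( ( 7 + 5 a_s c3 ε − sqrt( 49 − 560 a_s c4 ε − 80 a_s^2 c1 c4 ε^2 + 25 a_s^2 c3^2 ε^2 + 70 a_s c3 ε ) ) / (5 ε c4) ). Then f admits the first-order expansion f(ε) = sqrt(a_s/2) + ε a_s^{3/2} ( (√2/28) c1 − (5√2/28) c3 + (5√2/7) c4 ) + O(ε^2) as ε → 0⁺, i.e. (f(ε) − sqrt(a_s/2) − ε a_s^{3/2} ((√2/28) c1 − (5√2/28) c3 + (5√2/7) c4 ))/ε^2 is bounded as ε → 0⁺. -/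

import Mathlib

open Filter Topology Asymptotics

lemma taylor1_isBigO {h : ℝ → ℝ} (hh : ContDiffAt ℝ 2 h 0) :
    (fun x => h x - h 0 - deriv h 0 * x) =O[𝓝 0] fun x => x ^ 2 := by
  obtain ⟨u, hu, hcd⟩ := hh.contDiffOn le_rfl (by simp)
  obtain ⟨δ, hδ, hball⟩ := Metric.mem_nhds_iff.1 hu
  have hcd' : ContDiffOn ℝ 2 h (Metric.ball 0 δ) := hcd.mono hball
  have hdiff : DifferentiableOn ℝ h (Metric.ball 0 δ) :=
    hcd'.differentiableOn (by norm_num)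
  have hderiv_cd : ContDiffOn ℝ 1 (deriv h) (Metric.ball 0 δ) :=
    hcd'.deriv_of_isOpen Metric.isOpen_ball (by norm_num)
  have h0mem : (0:ℝ) ∈ Metric.ball (0:ℝ) δ := by simpa using hδ
  have hd0 : DifferentiableAt ℝ (deriv h) 0 :=
    ((hderiv_cd.differentiableOn (by norm_num)) 0 h0mem).differentiableAt
      (Metric.isOpen_ball.mem_nhds h0mem)
  have hO : (fun x : ℝ => deriv h x - deriv h 0) =O[𝓝 0] fun x => x - 0 :=
    hd0.isBigO_sub
  obtain ⟨C, hC0, hCbd⟩ := hO.exists_pos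
  rw [IsBigOWith] at hCbd
  obtain ⟨δ', hδ', hbd⟩ := Metric.eventually_nhds_iff.1 hCbd
  set δ'' := min δ δ' with hδ''
  have hδ''pos : 0 < δ'' := lt_min hδ hδ'
  apply IsBigO.of_bound C
  rw [Metric.eventually_nhds_iff]
  refine ⟨δ'', hδ''pos, fun x hx => ?_⟩
  simp only [dist_zero_right, Real.norm_eq_abs] at hx
  -- key: for y in uIcc 0 x, |y| ≤ |x| < δ''
  have habs : ∀ y ∈ Set.uIcc (0:ℝ) x, |y| ≤ |x| := by
    intro y hy
    rw [Set.uIcc_eq_union] at hy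
    rcases hy with hy | hy
    · rcases hy with ⟨h1, h2⟩
      rw [abs_le]; constructor
      · linarith [abs_nonneg x]
      · exact h2.trans (le_abs_self x)
    · rcases hy with ⟨h1, h2⟩
      rw [abs_le]; constructor
      · exact (neg_abs_le x).trans h1
      · linarith [abs_nonneg x]
  have hsub : Set.uIcc (0:ℝ) x ⊆ Metric.ball (0:ℝ) δ := by
    intro y hy
    simp only [Metric.mem_ball, dist_zero_right, Real.norm_eq_abs]
    exact lt_of_le_of_lt (habs y hy) (hx.trans_le (min_le_left _ _))
  have hg : ∀ y ∈ Set.uIcc (0:ℝ) x,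
      HasDerivWithinAt (fun y => h y - deriv h 0 * y)
        (deriv h y - deriv h 0) (Set.uIcc (0:ℝ) x) y := by
    intro y hy
    have hhy : HasDerivAt h (deriv h y) y :=
      ((hdiff y (hsub hy)).differentiableAt
        (Metric.isOpen_ball.mem_nhds (hsub hy))).hasDerivAt
    have : HasDerivAt (fun y => h y - deriv h 0 * y) (deriv h y - deriv h 0) y := by
      exact (hhy.sub ((hasDerivAt_id' y).const_mul (deriv h 0))).congr_deriv (by ring)
    exact this.hasDerivWithinAt
  have hbound : ∀ y ∈ Set.uIcc (0:ℝ) x, ‖deriv h y - deriv h 0‖ ≤ C * |x| := by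
    intro y hy
    have hyd : dist y 0 < δ' := by
      rw [Real.dist_eq, sub_zero]
      exact lt_of_le_of_lt (habs y hy) (hx.trans_le (min_le_right _ _))
    calc ‖deriv h y - deriv h 0‖ ≤ C * ‖y - 0‖ := hbd hyd
    _ ≤ C * |x| := by
        rw [sub_zero, Real.norm_eq_abs]
        exact mul_le_mul_of_nonneg_left (habs y hy) hC0.le
  have key := Convex.norm_image_sub_le_of_norm_hasDerivWithin_le hg hbound
    (convex_uIcc _ _) (Set.left_mem_uIcc) (Set.right_mem_uIcc)
  simp only [mul_zero, sub_zero, Real.norm_eq_abs] at key ⊢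
  calc |h x - h 0 - deriv h 0 * x| = |(h x - deriv h 0 * x) - h 0| := by ring_nf
  _ ≤ C * |x| * |x| := key
  _ = C * |x ^ 2| := by rw [abs_pow]; ring


noncomputable def Pfun (a c1 c3 c4 : ℝ) (ε : ℝ) : ℝ :=
  49 + (70*a*c3 - 560*a*c4)*ε + (25*a^2*c3^2 - 80*a^2*c1*c4)*ε^2

noncomputable def hfun (a c1 c3 c4 : ℝ) (ε : ℝ) : ℝ :=
  Real.sqrt ((7*a + a^2*c1*ε) / ((7 + 5*a*c3*ε) + Real.sqrt (Pfun a c1 c3 c4 ε)))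

lemma Pfun_zero (a c1 c3 c4 : ℝ) : Pfun a c1 c3 c4 0 = 49 := by simp [Pfun]

lemma sqrt49 : Real.sqrt 49 = 7 := by
  rw [show (49:ℝ) = 7^2 by norm_num, Real.sqrt_sq (by norm_num)]

lemma Pfun_hasDerivAt (a c1 c3 c4 : ℝ) :
    HasDerivAt (Pfun a c1 c3 c4) (70*a*c3 - 560*a*c4) 0 := by
  have h1 : HasDerivAt (fun ε : ℝ => ε) 1 0 := hasDerivAt_id 0
  have h2 : HasDerivAt (fun ε : ℝ => ε^2) (2*(0:ℝ)^1) 0 := by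
    simpa using hasDerivAt_pow 2 (0:ℝ)
  have := ((hasDerivAt_const (0:ℝ) (49:ℝ)).add
      ((h1.const_mul (70*a*c3 - 560*a*c4)).add
        (h2.const_mul (25*a^2*c3^2 - 80*a^2*c1*c4))))
  refine (this.congr_deriv (by norm_num)).congr_of_eventuallyEq
    (Filter.Eventually.of_forall fun ε => ?_)
  simp only [Pfun, Pi.add_apply]; ring

lemma Pfun_contDiff (a c1 c3 c4 : ℝ) : ContDiff ℝ 2 (Pfun a c1 c3 c4) := by
  unfold Pfun; fun_prop

lemma hfun_zero (a c1 c3 c4 : ℝ) : hfun a c1 c3 c4 0 = Real.sqrt (a/2) := by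
  unfold hfun
  rw [Pfun_zero, sqrt49]
  congr 1
  ring

lemma hfun_contDiffAt (a c1 c3 c4 : ℝ) (ha : 0 < a) :
    ContDiffAt ℝ 2 (hfun a c1 c3 c4) 0 := by
  have hP0 : Pfun a c1 c3 c4 0 ≠ 0 := by rw [Pfun_zero]; norm_num
  have hs : ContDiffAt ℝ 2 (fun ε => Real.sqrt (Pfun a c1 c3 c4 ε)) 0 :=
    (Pfun_contDiff a c1 c3 c4).contDiffAt.sqrt hP0
  have hD : ContDiffAt ℝ 2 (fun ε => (7 + 5*a*c3*ε) + Real.sqrt (Pfun a c1 c3 c4 ε)) 0 := by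
    apply ContDiffAt.add _ hs
    fun_prop
  have hD0 : ((7 + 5*a*c3*(0:ℝ)) + Real.sqrt (Pfun a c1 c3 c4 0)) ≠ 0 := by
    rw [Pfun_zero, sqrt49]; norm_num
  have hN : ContDiffAt ℝ 2 (fun ε : ℝ => 7*a + a^2*c1*ε) 0 := by fun_prop
  have hq : ContDiffAt ℝ 2
      (fun ε => (7*a + a^2*c1*ε) / ((7 + 5*a*c3*ε) + Real.sqrt (Pfun a c1 c3 c4 ε))) 0 :=
    hN.div hD hD0
  have hq0 : (7*a + a^2*c1*(0:ℝ)) / ((7 + 5*a*c3*(0:ℝ)) + Real.sqrt (Pfun a c1 c3 c4 0)) ≠ 0 := by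
    rw [Pfun_zero, sqrt49]
    simp only [mul_zero, add_zero]
    positivity
  exact hq.sqrt hq0

lemma hfun_hasDerivAt (a c1 c3 c4 : ℝ) (ha : 0 < a) :
    HasDerivAt (hfun a c1 c3 c4)
      ((a^2*c1*14 - 7*a*(10*a*c3 - 40*a*c4))/196 / (2*Real.sqrt (a/2))) 0 := by
  have hP := Pfun_hasDerivAt a c1 c3 c4
  have hP0 : Pfun a c1 c3 c4 0 ≠ 0 := by rw [Pfun_zero]; norm_num
  have hs : HasDerivAt (fun ε => Real.sqrt (Pfun a c1 c3 c4 ε))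
      ((70*a*c3 - 560*a*c4) / (2*Real.sqrt (Pfun a c1 c3 c4 0))) 0 := hP.sqrt hP0
  have hL : HasDerivAt (fun ε : ℝ => 7 + 5*a*c3*ε) (5*a*c3) 0 := by
    exact (((hasDerivAt_id' (0:ℝ)).const_mul (5*a*c3)).const_add 7).congr_deriv (mul_one _)
  have hD : HasDerivAt (fun ε => (7 + 5*a*c3*ε) + Real.sqrt (Pfun a c1 c3 c4 ε))
      (5*a*c3 + (70*a*c3 - 560*a*c4) / (2*Real.sqrt (Pfun a c1 c3 c4 0))) 0 := hL.add hs
  have hN : HasDerivAt (fun ε : ℝ => 7*a + a^2*c1*ε) (a^2*c1) 0 := by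
    exact (((hasDerivAt_id' (0:ℝ)).const_mul (a^2*c1)).const_add (7*a)).congr_deriv (mul_one _)
  have hD0 : ((7 + 5*a*c3*(0:ℝ)) + Real.sqrt (Pfun a c1 c3 c4 0)) ≠ 0 := by
    rw [Pfun_zero, sqrt49]; norm_num
  have hq := hN.div hD hD0
  have hq0 : (7*a + a^2*c1*(0:ℝ)) / ((7 + 5*a*c3*(0:ℝ)) + Real.sqrt (Pfun a c1 c3 c4 0)) ≠ 0 := by
    rw [Pfun_zero, sqrt49]; simp only [mul_zero, add_zero]; positivity
  have h := hq.sqrt hq0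
  convert h using 1
  · rfl
  simp only [Pi.div_apply]
  rw [Pfun_zero, sqrt49]
  have : (7*a + a^2*c1*(0:ℝ)) / ((7 + 5*a*c3*(0:ℝ)) + 7) = a/2 := by ring
  rw [this]
  norm_num
  ring

lemma coeff_eq (a c1 c3 c4 : ℝ) (ha : 0 < a) :
    (a^2*c1*14 - 7*a*(10*a*c3 - 40*a*c4))/196 / (2*Real.sqrt (a/2))
      = a ^ ((3:ℝ)/2) * (Real.sqrt 2 / 28 * c1 - 5 * Real.sqrt 2 / 28 * c3
          + 5 * Real.sqrt 2 / 7 * c4) := by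
  have h32 : a ^ ((3:ℝ)/2) = a * Real.sqrt a := by
    rw [show (3:ℝ)/2 = 1 + 1/2 by norm_num, Real.rpow_add ha, Real.rpow_one,
      ← Real.sqrt_eq_rpow]
  have hsa : 0 < Real.sqrt a := Real.sqrt_pos.2 ha
  have hs2 : 0 < Real.sqrt 2 := by positivity
  have ha2 : Real.sqrt (a/2) = Real.sqrt a / Real.sqrt 2 := Real.sqrt_div ha.le 2
  have hsa2 : Real.sqrt a ^ 2 = a := Real.sq_sqrt ha.le
  have hs22 : Real.sqrt 2 ^ 2 = 2 := Real.sq_sqrt (by norm_num)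
  rw [h32, ha2]
  field_simp
  linear_combination (-2744*(c1 - 5*c3 + 20*c4)) * hsa2

lemma feq (a c1 c3 c4 : ℝ) (ha : 0 < a) (hc4 : c4 ≠ 0) :
    ∀ᶠ ε in 𝓝[>] (0:ℝ),
      1 / 4 * Real.sqrt
          ((7 + 5 * a * c3 * ε
              - Real.sqrt (49 - 560 * a * c4 * ε - 80 * a ^ 2 * c1 * c4 * ε ^ 2
                  + 25 * a ^ 2 * c3 ^ 2 * ε ^ 2 + 70 * a * c3 * ε))
            / (5 * ε * c4)) = hfun a c1 c3 c4 ε := by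
  have hPc : Continuous (Pfun a c1 c3 c4) := (Pfun_contDiff a c1 c3 c4).continuous
  have h1 : ∀ᶠ ε in 𝓝 (0:ℝ), 0 < Pfun a c1 c3 c4 ε := by
    have h := hPc.continuousAt (x := 0)
    rw [ContinuousAt, Pfun_zero] at h
    exact h.eventually (eventually_gt_nhds (by norm_num))
  have h2 : ∀ᶠ ε in 𝓝 (0:ℝ), 0 < 7 + 5*a*c3*ε := by
    have hcont : Continuous (fun ε : ℝ => 7 + 5*a*c3*ε) := by fun_prop
    have h := hcont.continuousAt (x := 0)
    rw [ContinuousAt] at h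
    exact h.eventually (eventually_gt_nhds (show (0:ℝ) < 7 + 5*a*c3*0 by norm_num))
  filter_upwards [h1.filter_mono nhdsWithin_le_nhds, h2.filter_mono nhdsWithin_le_nhds,
    self_mem_nhdsWithin] with ε hP hL hε
  rw [Set.mem_Ioi] at hε
  have hR : (49 - 560 * a * c4 * ε - 80 * a ^ 2 * c1 * c4 * ε ^ 2
      + 25 * a ^ 2 * c3 ^ 2 * ε ^ 2 + 70 * a * c3 * ε) = Pfun a c1 c3 c4 ε := by
    unfold Pfun; ring
  rw [hR]
  set s := Real.sqrt (Pfun a c1 c3 c4 ε) with hs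
  have hsq : s^2 = Pfun a c1 c3 c4 ε := Real.sq_sqrt hP.le
  have hsnn : 0 ≤ s := Real.sqrt_nonneg _
  have hDpos : 0 < (7 + 5*a*c3*ε) + s := by linarith
  have key : (7 + 5*a*c3*ε - s)/(5*ε*c4)
      = 16*((7*a + a^2*c1*ε)/((7 + 5*a*c3*ε) + s)) := by
    rw [show (16:ℝ)*((7*a + a^2*c1*ε)/((7 + 5*a*c3*ε) + s))
        = (16*(7*a + a^2*c1*ε))/((7 + 5*a*c3*ε) + s) by ring,
      div_eq_div_iff (by positivity) hDpos.ne']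
    unfold Pfun at hsq
    linear_combination (-1 : ℝ) * hsq
  rw [key, show (16:ℝ)*((7*a + a^2*c1*ε)/((7 + 5*a*c3*ε) + s))
      = 16*((7*a + a^2*c1*ε)/((7 + 5*a*c3*ε) + s)) from rfl,
    Real.sqrt_mul (by norm_num : (0:ℝ) ≤ 16),
    show Real.sqrt 16 = 4 by
      rw [show (16:ℝ) = 4^2 by norm_num, Real.sqrt_sq (by norm_num)]]
  unfold hfun
  rw [hs]
  ring


/-- First-order expansion of the inverse-width root:
`f(ε) = √(a/2) + ε a^{3/2}((√2/28)c1 − (5√2/28)c3 + (5√2/7)c4) + O(ε²)` as `ε → 0⁺`. -/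
theorem inverse_width_expansion (a c1 c3 c4 : ℝ) (ha : 0 < a) (hc4 : c4 ≠ 0) :
    (fun ε : ℝ =>
        1 / 4 * Real.sqrt
          ((7 + 5 * a * c3 * ε
              - Real.sqrt (49 - 560 * a * c4 * ε - 80 * a ^ 2 * c1 * c4 * ε ^ 2
                  + 25 * a ^ 2 * c3 ^ 2 * ε ^ 2 + 70 * a * c3 * ε))
            / (5 * ε * c4))
        - Real.sqrt (a / 2)
        - ε * a ^ ((3 : ℝ) / 2)
            * (Real.sqrt 2 / 28 * c1 - 5 * Real.sqrt 2 / 28 * c3 + 5 * Real.sqrt 2 / 7 * c4))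
      =O[𝓝[>] 0] fun ε : ℝ => ε ^ 2 := by
  have H := taylor1_isBigO (hfun_contDiffAt a c1 c3 c4 ha)
  have hd : deriv (hfun a c1 c3 c4) 0
      = a ^ ((3 : ℝ) / 2) * (Real.sqrt 2 / 28 * c1 - 5 * Real.sqrt 2 / 28 * c3
          + 5 * Real.sqrt 2 / 7 * c4) := by
    rw [(hfun_hasDerivAt a c1 c3 c4 ha).deriv, coeff_eq a c1 c3 c4 ha]
  rw [hfun_zero, hd] at H
  have H' := H.mono (nhdsWithin_le_nhds : 𝓝[>] (0:ℝ) ≤ 𝓝 0)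
  refine H'.congr' ?_ EventuallyEq.rfl
  filter_upwards [feq a c1 c3 c4 ha hc4] with ε hε
  rw [hε]
  ring
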